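/- For every integer k ≥ 2 there exists an integer N (depending on k) such that every connected simple graph G on n ≥ N vertices satisfies λ_k(D(G)) ≥ −2, where λ_k(D(G)) is the k-th largest distance eigenvalue of G. -/

import Mathlib

open Finset SimpleGraph

/-- The distance matrix of a simple graph on `Fin n`, as a real matrix: the
`(i,j)` entry is the graph distance `d_G(i,j)`. -/
noncomputable def distMatrix {n : ℕ} (G : SimpleGraph (Fin n)) :
    Matrix (Fin n) (Fin n) ℝ :=
  fun i j => (G.dist i j : ℝ)

/-- The eigenvalues of the distance matrix, listed in decreasing order. -/
noncomputable def distEigList {n : ℕ} (G : SimpleGraph (Fin n)) : List ℝ :=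
  if h : (distMatrix G).IsHermitian then
    (List.ofFn h.eigenvalues).insertionSort (· ≥ ·)
  else []

/-- `distEig G k` is the `k`-th largest distance eigenvalue `λ_k(D(G))` (`1`-indexed). -/
noncomputable def distEig {n : ℕ} (G : SimpleGraph (Fin n)) (k : ℕ) : ℝ :=
  (distEigList G).getD (k - 1) 0

/-- `S_k(D(G))`, the sum of the `k` largest distance eigenvalues. -/
noncomputable def distEigSum {n : ℕ} (G : SimpleGraph (Fin n)) (k : ℕ) : ℝ :=
  ((distEigList G).take k).sum

/-- `G` has independence number at most `s`: every set of pairwise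
nonadjacent vertices has at most `s` elements. -/
def IndepNumLE {V : Type*} (G : SimpleGraph V) (s : ℕ) : Prop :=
  ∀ S : Finset V, (∀ u ∈ S, ∀ v ∈ S, u ≠ v → ¬ G.Adj u v) → S.card ≤ s


open Matrix
section Aux

def ramseyFuel (c : ℕ) : ℕ → (Fin c → ℕ) → ℕ
  | 0, _ => 0
  | s+1, b => if ∀ i, b i ≠ 0 then 1 + ∑ i, ramseyFuel c s (Function.update b i (b i - 1)) else 0

theorem ramsey_prop (c : ℕ) (hc : 0 < c) (s : ℕ) : ∀ (b : Fin c → ℕ), (∑ i, b i) ≤ s →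
    ∀ {V : Type} [DecidableEq V] (f : V → V → Fin c), (∀ u v, f u v = f v u) →
    ∀ S : Finset V, ramseyFuel c s b ≤ S.card →
    ∃ i : Fin c, ∃ T ⊆ S, T.card = b i ∧ ∀ u ∈ T, ∀ v ∈ T, u ≠ v → f u v = i := by
  induction s with
  | zero =>
    intro b hb V _ f hf S hS
    refine ⟨⟨0, hc⟩, ∅, empty_subset _, ?_, by simp⟩
    have : b ⟨0, hc⟩ = 0 := by
      have := Finset.single_le_sum (f := b) (fun i _ => Nat.zero_le _) (mem_univ ⟨0, hc⟩)
      omega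
    simp [this]
  | succ s ih =>
    intro b hb V _ f hf S hS
    by_cases hball : ∀ i, b i ≠ 0
    · -- main case
      rw [ramseyFuel, if_pos hball] at hS
      have hSne : S.Nonempty := Finset.card_pos.mp (by omega)
      obtain ⟨v, hv⟩ := hSne
      set S' := S.erase v with hS'
      have hcardS' : S'.card = S.card - 1 := Finset.card_erase_of_mem hv
      have hcard' : ∑ i, ramseyFuel c s (Function.update b i (b i - 1)) ≤ S'.card := by
        omega
      -- fibers of the coloring f v ·
      have hfib : S'.card = ∑ i : Fin c, (S'.filter (fun x => f v x = i)).card :=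
        Finset.card_eq_sum_card_fiberwise (fun x _ => mem_univ (f v x))
      have hex : ∃ i : Fin c, ramseyFuel c s (Function.update b i (b i - 1)) ≤
          (S'.filter (fun x => f v x = i)).card := by
        by_contra hno
        push_neg at hno
        have h1 : ∑ i : Fin c, (S'.filter (fun x => f v x = i)).card <
            ∑ i, ramseyFuel c s (Function.update b i (b i - 1)) := by
          apply Finset.sum_lt_sum_of_nonempty ⟨⟨0, hc⟩, mem_univ _⟩
          intro i _
          exact hno i
        omega
      obtain ⟨i, hi⟩ := hex
      have hsum' : (∑ j, Function.update b i (b i - 1) j) ≤ s := by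
        have h0 : 0 < b i := Nat.pos_of_ne_zero (hball i)
        rw [Finset.sum_update_of_mem (mem_univ i)]
        have h2 : ∑ x ∈ univ \ {i}, b x = ∑ x ∈ univ.erase i, b x := by
          rw [Finset.erase_eq]
        have h3 : b i + ∑ x ∈ univ.erase i, b x = ∑ x, b x :=
          Finset.add_sum_erase _ b (mem_univ i)
        omega
      obtain ⟨j, T, hTsub, hTcard, hTmono⟩ :=
        ih (Function.update b i (b i - 1)) hsum' f hf (S'.filter (fun x => f v x = i)) hi
      by_cases hji : j = i
      · subst hji
        refine ⟨j, insert v T, ?_, ?_, ?_⟩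
        · intro x hx
          rcases Finset.mem_insert.mp hx with rfl | hx
          · exact hv
          · exact (Finset.erase_subset _ _) (Finset.mem_filter.mp (hTsub hx)).1
        · have hvT : v ∉ T := by
            intro hvT
            have := (Finset.mem_filter.mp (hTsub hvT)).1
            exact (Finset.notMem_erase v S) this
          rw [Finset.card_insert_of_notMem hvT, hTcard, Function.update_self]
          have := Nat.pos_of_ne_zero (hball j)
          omega
        · intro x hx y hy hxy
          rcases Finset.mem_insert.mp hx with hxv | hxT
          · rcases Finset.mem_insert.mp hy with hyv | hyT
            · exact absurd (hxv.trans hyv.symm) hxy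
            · subst hxv; exact (Finset.mem_filter.mp (hTsub hyT)).2
          · rcases Finset.mem_insert.mp hy with hyv | hyT
            · subst hyv; rw [hf]; exact (Finset.mem_filter.mp (hTsub hxT)).2
            · exact hTmono x hxT y hyT hxy
      · refine ⟨j, T, ?_, ?_, hTmono⟩
        · intro x hx
          exact (Finset.erase_subset _ _) (Finset.mem_filter.mp (hTsub hx)).1
        · rw [hTcard, Function.update_of_ne hji]
    · push_neg at hball
      obtain ⟨i, hi⟩ := hball
      exact ⟨i, ∅, empty_subset _, by simp [hi], by simp⟩

lemma distMatrix_isHermitian {n : ℕ} (G : SimpleGraph (Fin n)) :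
    (distMatrix G).IsHermitian := by
  ext i j
  simp [Matrix.conjTranspose_apply, distMatrix, SimpleGraph.dist_comm]

/-- If a sorted-descending list has at least `k` entries `≥ c`, its `k`-th entry is `≥ c`. -/
lemma sorted_getD_ge (l : List ℝ) (hl : l.Pairwise (· ≥ ·)) (k : ℕ) (hk : 1 ≤ k) (c : ℝ)
    (hcount : k ≤ l.countP (fun x => decide (c ≤ x))) :
    c ≤ l.getD (k-1) 0 := by
  have hlen : k ≤ l.length := le_trans hcount (l.countP_le_length)
  have hklt : k - 1 < l.length := by omega
  rw [List.getD_eq_getElem l 0 hklt]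
  by_contra hlt
  push_neg at hlt
  -- all entries at index ≥ k-1 are < c
  have hdrop : ∀ x ∈ l.drop (k-1), ¬ (c ≤ x) := by
    intro x hx
    obtain ⟨i, hi, hgi⟩ := List.mem_iff_getElem.mp hx
    have hld : (l.drop (k-1)).length = l.length - (k-1) := List.length_drop
    have hi' : k - 1 + i < l.length := by omega
    have hx2 : x = l[k-1+i]'hi' := by
      rw [← hgi]; simp
    have hrel : l[k-1+i]'hi' ≤ l[k-1]'hklt := by
      rcases Nat.eq_zero_or_pos i with rfl | hip
      · simp
      · exact List.pairwise_iff_getElem.mp hl _ _ _ _ (by omega)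
    push_neg
    rw [hx2]
    exact lt_of_le_of_lt hrel hlt
  have h0 : (l.drop (k-1)).countP (fun x => decide (c ≤ x)) = 0 := by
    rw [List.countP_eq_zero]
    intro a ha
    simpa using hdrop a ha
  have hsplit : l.countP (fun x => decide (c ≤ x)) =
      (l.take (k-1)).countP (fun x => decide (c ≤ x))
      + (l.drop (k-1)).countP (fun x => decide (c ≤ x)) := by
    rw [← List.countP_append, List.take_append_drop]
  have htake : (l.take (k-1)).countP (fun x => decide (c ≤ x)) ≤ k - 1 := by
    refine le_trans (List.countP_le_length) ?_
    simp [List.length_take]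
  omega

lemma countP_ofFn {n : ℕ} (f : Fin n → ℝ) (p : ℝ → Prop) [DecidablePred p] :
    (List.ofFn f).countP (fun x => decide (p x)) = (univ.filter (fun i => p (f i))).card := by
  classical
  have h1 : (List.ofFn f).countP (fun x => decide (p x))
      = Multiset.countP (fun x => p x) (↑(List.ofFn f) : Multiset ℝ) := by
    simp [Multiset.coe_countP]
  rw [h1, ← Fin.univ_val_map, Multiset.countP_map]
  rw [Finset.card_filter]
  simp [Finset.sum_boole, Multiset.countP_eq_card_filter]
  rfl

/-- Key lemma: a `k`-dimensional family on which the quadratic form of the distance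
matrix is `≥ -2` forces `λ_k ≥ -2`. -/
lemma distEig_ge_of_family {n k : ℕ} (G : SimpleGraph (Fin n)) (hk : 1 ≤ k)
    (y : Fin k → (Fin n → ℝ))
    (hq : ∀ a : Fin k → ℝ,
      -2 * ((∑ i, a i • y i) ⬝ᵥ (∑ i, a i • y i))
        ≤ (∑ i, a i • y i) ⬝ᵥ (distMatrix G *ᵥ (∑ i, a i • y i)))
    (hind : ∀ a : Fin k → ℝ, ∑ i, a i • y i = 0 → a = 0) :
    distEig G k ≥ -2 := by
  classical
  have hH := distMatrix_isHermitian G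
  set D := distMatrix G with hD
  set ev : Fin n → ℝ := hH.eigenvalues with hev
  set U : Matrix (Fin n) (Fin n) ℝ := (hH.eigenvectorUnitary : Matrix (Fin n) (Fin n) ℝ)
    with hU
  have hmem := hH.eigenvectorUnitary.2
  rw [Unitary.mem_iff] at hmem
  have hUU : U * star U = 1 := hmem.2
  have hUU' : star U * U = 1 := hmem.1
  have hUt : star U = Uᵀ := by
    ext i j
    simp [Matrix.conjTranspose_apply]
  have hUdot : ∀ v w : Fin n → ℝ, (U *ᵥ v) ⬝ᵥ (U *ᵥ w) = v ⬝ᵥ w := by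
    intro v w
    rw [Matrix.dotProduct_mulVec, ← Matrix.mulVec_transpose, Matrix.mulVec_mulVec,
      ← hUt, hUU', Matrix.one_mulVec]
  set T : Finset (Fin n) := univ.filter (fun i => (-2:ℝ) ≤ ev i) with hT
  -- Claim: k ≤ T.card
  have hclaim : k ≤ T.card := by
    by_contra hlt
    push_neg at hlt
    set φ : (Fin k → ℝ) →ₗ[ℝ] (Fin n → ℝ) :=
      { toFun := fun a => ∑ i, a i • y i
        map_add' := by intro a b; simp [add_smul, Finset.sum_add_distrib]
        map_smul' := by intro m a; simp [smul_smul, Finset.smul_sum] }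
    set L : (Fin k → ℝ) →ₗ[ℝ] ({i // i ∈ T} → ℝ) :=
      (LinearMap.funLeft ℝ ℝ (Subtype.val)) ∘ₗ (Matrix.mulVecLin (star U)) ∘ₗ φ with hL
    have hnotinj : ¬ Function.Injective L := by
      intro hinj
      have := LinearMap.finrank_le_finrank_of_injective hinj
      simp only [Module.finrank_pi] at this
      rw [Fintype.card_coe] at this
      simp at this
      omega
    rw [Function.not_injective_iff] at hnotinj
    obtain ⟨a, b, hab, hne⟩ := hnotinj
    set a₀ := a - b with ha₀
    have ha₀ne : a₀ ≠ 0 := sub_ne_zero.mpr hne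
    have hL0 : L a₀ = 0 := by rw [ha₀, map_sub, hab, sub_self]
    set x : Fin n → ℝ := φ a₀ with hx
    have hxne : x ≠ 0 := by
      intro h
      exact ha₀ne (hind a₀ h)
    set cv : Fin n → ℝ := star U *ᵥ x with hcv
    have hcvT : ∀ i ∈ T, cv i = 0 := by
      intro i hi
      have := congrFun hL0 ⟨i, hi⟩
      simpa [hL, hcv, hx] using this
    have hxU : U *ᵥ cv = x := by
      rw [hcv, Matrix.mulVec_mulVec, hUU, Matrix.one_mulVec]
    have hcvne : cv ≠ 0 := by
      intro h
      rw [h, Matrix.mulVec_zero] at hxU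
      exact hxne hxU.symm
    have hdiag : Matrix.diagonal (RCLike.ofReal ∘ ev) = Matrix.diagonal ev := by
      have h : (RCLike.ofReal ∘ ev : Fin n → ℝ) = ev := funext fun i => by simp
      rw [h]
    have hdiagcv : Matrix.diagonal ev *ᵥ cv = fun i => ev i * cv i := by
      funext i
      simp [Matrix.mulVec_diagonal]
    have hDx : D *ᵥ x = U *ᵥ (Matrix.diagonal ev *ᵥ cv) := by
      conv_lhs => rw [hH.spectral_theorem]
      rw [hdiag, hcv, Matrix.mulVec_mulVec, Matrix.mulVec_mulVec, Matrix.mul_assoc]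
      rw [Unitary.conjStarAlgAut_apply, Matrix.mul_assoc]
    have hform : x ⬝ᵥ (D *ᵥ x) = ∑ i, cv i * (ev i * cv i) := by
      rw [hDx, hdiagcv, ← hxU, hUdot]
      rfl
    have hnorm : x ⬝ᵥ x = ∑ i, cv i * cv i := by
      rw [← hxU, hUdot]
      rfl
    obtain ⟨i₀, hi₀⟩ : ∃ i, cv i ≠ 0 := by
      by_contra hno
      push_neg at hno
      exact hcvne (funext hno)
    have hi₀T : i₀ ∉ T := fun h => hi₀ (hcvT i₀ h)
    have hstrict : x ⬝ᵥ (D *ᵥ x) < -2 * (x ⬝ᵥ x) := by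
      rw [hform, hnorm, Finset.mul_sum]
      apply Finset.sum_lt_sum
      · intro i _
        by_cases hiT : i ∈ T
        · rw [hcvT i hiT]; simp
        · have hev2 : ev i < -2 := by
            by_contra hge
            push_neg at hge
            exact hiT (by simp [hT, hge])
          nlinarith [sq_nonneg (cv i)]
      · refine ⟨i₀, mem_univ _, ?_⟩
        have hev2 : ev i₀ < -2 := by
          by_contra hge
          push_neg at hge
          exact hi₀T (by simp [hT, hge])
        have hpos : 0 < cv i₀ * cv i₀ := mul_self_pos.mpr hi₀
        nlinarith
    have := hq a₀
    have hxeq : (∑ i, a₀ i • y i) = x := rfl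
    rw [hxeq] at this
    exact absurd this (not_le.mpr hstrict)
  -- conclude from the count
  have hsorted : (distEigList G).Pairwise (· ≥ ·) := by
    rw [distEigList, dif_pos (distMatrix_isHermitian G)]
    exact List.pairwise_insertionSort _ _
  have hlist : distEigList G = (List.ofFn ev).insertionSort (· ≥ ·) := by
    rw [distEigList, dif_pos (distMatrix_isHermitian G)]
  have hcount : k ≤ (distEigList G).countP (fun x => decide ((-2:ℝ) ≤ x)) := by
    rw [hlist, (List.perm_insertionSort _ _).countP_eq]
    rw [countP_ofFn ev (fun x => (-2:ℝ) ≤ x)]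
    exact hclaim.trans (le_of_eq (by rw [hT]))
  have := sorted_getD_ge (distEigList G) hsorted k hk (-2) hcount
  simpa [distEig] using this

lemma sum_dotProduct' {n k : ℕ} (f : Fin k → Fin n → ℝ) (v : Fin n → ℝ) :
    (∑ i, f i) ⬝ᵥ v = ∑ i, f i ⬝ᵥ v := by
  simp only [dotProduct, Finset.sum_apply, Finset.sum_mul]
  exact Finset.sum_comm

lemma dotProduct_sum' {n k : ℕ} (v : Fin n → ℝ) (f : Fin k → Fin n → ℝ) :
    v ⬝ᵥ (∑ i, f i) = ∑ i, v ⬝ᵥ f i := by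
  simp only [dotProduct, Finset.sum_apply, Finset.mul_sum]
  exact Finset.sum_comm

lemma dot_expand {n k : ℕ} (M : Matrix (Fin n) (Fin n) ℝ) (y : Fin k → Fin n → ℝ)
    (a : Fin k → ℝ) :
    (∑ i, a i • y i) ⬝ᵥ (M *ᵥ (∑ i, a i • y i))
      = ∑ i, ∑ j, a i * a j * (y i ⬝ᵥ (M *ᵥ y j)) := by
  have hMx : M *ᵥ (∑ j, a j • y j) = ∑ j, a j • (M *ᵥ y j) := by
    have h : M *ᵥ (∑ j, a j • y j) = M.mulVecLin (∑ j, a j • y j) := rfl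
    rw [h, map_sum]
    simp [Matrix.mulVecLin_apply]
  rw [hMx, sum_dotProduct']
  refine Finset.sum_congr rfl fun i _ => ?_
  rw [smul_dotProduct, dotProduct_sum', Finset.smul_sum]
  refine Finset.sum_congr rfl fun j _ => ?_
  rw [dotProduct_smul]
  simp only [smul_eq_mul]
  ring

lemma dot_expand' {n k : ℕ} (y : Fin k → Fin n → ℝ) (a : Fin k → ℝ) :
    (∑ i, a i • y i) ⬝ᵥ (∑ i, a i • y i)
      = ∑ i, ∑ j, a i * a j * (y i ⬝ᵥ y j) := by
  rw [sum_dotProduct']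
  refine Finset.sum_congr rfl fun i _ => ?_
  rw [smul_dotProduct, dotProduct_sum', Finset.smul_sum]
  refine Finset.sum_congr rfl fun j _ => ?_
  rw [dotProduct_smul]
  simp only [smul_eq_mul]
  ring

lemma pattern_sum {k : ℕ} (a : Fin k → ℝ) (α β : ℝ) (Q : Fin k → Fin k → ℝ)
    (hQ : ∀ i j, Q i j = α + (if i = j then β else 0)) :
    ∑ i, ∑ j, a i * a j * Q i j = α * (∑ i, a i)^2 + β * (∑ i, (a i)^2) := by
  have h : ∀ i : Fin k, ∑ j, a i * a j * Q i j
      = a i * (∑ j, a j) * α + a i * a i * β := by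
    intro i
    have : ∀ j, a i * a j * Q i j
        = a i * a j * α + (if j = i then a i * a j * β else 0) := by
      intro j
      rw [hQ i j]
      by_cases hij : i = j
      · subst hij; simp; ring
      · have : ¬ (j = i) := fun h => hij h.symm
        simp [hij, this]
    rw [Finset.sum_congr rfl (fun j _ => this j), Finset.sum_add_distrib,
      Finset.sum_ite_eq' univ i (fun j => a i * a j * β)]
    have h2 : ∑ j, a i * a j * α = a i * (∑ j, a j) * α := by
      simp only [Finset.sum_mul, Finset.mul_sum]
    rw [h2, if_pos (Finset.mem_univ i)]
  rw [Finset.sum_congr rfl (fun i _ => h i), Finset.sum_add_distrib]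
  rw [← Finset.sum_mul, ← Finset.sum_mul, ← Finset.sum_mul]
  have h4 : ∑ x : Fin k, a x * a x = ∑ i, (a i)^2 :=
    Finset.sum_congr rfl fun i _ => by ring
  rw [h4]
  ring

lemma distEig_ge_of_pattern {n k : ℕ} (G : SimpleGraph (Fin n)) (hk : 1 ≤ k)
    (y : Fin k → Fin n → ℝ) (α β γ δ : ℝ)
    (hq : ∀ i j, y i ⬝ᵥ (distMatrix G *ᵥ y j) = α + (if i = j then β else 0))
    (hg : ∀ i j, y i ⬝ᵥ y j = γ + (if i = j then δ else 0))
    (h1 : 0 ≤ α + 2*γ) (h2 : 0 ≤ β + 2*δ) (hγ : 0 ≤ γ) (hδ : 0 < δ) :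
    distEig G k ≥ -2 := by
  have hsumsq : ∀ a : Fin k → ℝ, (0:ℝ) ≤ ∑ i, (a i)^2 :=
    fun a => Finset.sum_nonneg fun i _ => sq_nonneg (a i)
  apply distEig_ge_of_family G hk y
  · intro a
    rw [dot_expand, dot_expand',
      pattern_sum a α β _ hq, pattern_sum a γ δ _ hg]
    nlinarith [sq_nonneg (∑ i, a i), hsumsq a]
  · intro a ha
    have h0 : γ * (∑ i, a i)^2 + δ * (∑ i, (a i)^2) = 0 := by
      rw [← pattern_sum a γ δ _ hg, ← dot_expand', ha]
      simp
    have ht : ∑ i, (a i)^2 = 0 := by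
      nlinarith [sq_nonneg (∑ i, a i), hsumsq a]
    funext i
    have := (Finset.sum_eq_zero_iff_of_nonneg
      (fun j (_ : j ∈ univ) => sq_nonneg (a j))).mp ht i (mem_univ i)
    simpa using pow_eq_zero_iff (n := 2) (by norm_num) |>.mp this

/-- distance 2 from a common neighbour -/
lemma dist_eq_two {V : Type*} {G : SimpleGraph V} (hconn : G.Connected) {u v w : V}
    (huv : u ≠ v) (hnadj : ¬ G.Adj u v) (h1 : G.Adj u w) (h2 : G.Adj w v) :
    G.dist u v = 2 := by
  have hle : G.dist u v ≤ 2 := by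
    have := SimpleGraph.dist_le (Walk.cons h1 (Walk.cons h2 Walk.nil))
    simpa using this
  have hpos : 0 < G.dist u v := hconn.pos_dist_of_ne huv
  have hne1 : G.dist u v ≠ 1 := fun h => hnadj (SimpleGraph.dist_eq_one_iff_adj.mp h)
  omega

lemma quad_sub {n : ℕ} (D : Matrix (Fin n) (Fin n) ℝ) (p q r s : Fin n → ℝ) :
    (p - q) ⬝ᵥ (D *ᵥ (r - s))
      = p ⬝ᵥ (D *ᵥ r) - p ⬝ᵥ (D *ᵥ s) - q ⬝ᵥ (D *ᵥ r) + q ⬝ᵥ (D *ᵥ s) := by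
  rw [Matrix.mulVec_sub, sub_dotProduct, dotProduct_sub, dotProduct_sub]
  ring

lemma dot_sub_sub {n : ℕ} (p q r s : Fin n → ℝ) :
    (p - q) ⬝ᵥ (r - s) = p ⬝ᵥ r - p ⬝ᵥ s - q ⬝ᵥ r + q ⬝ᵥ s := by
  rw [sub_dotProduct, dotProduct_sub, dotProduct_sub]
  ring

lemma pair_quad {n : ℕ} (D : Matrix (Fin n) (Fin n) ℝ) (u w u' w' : Fin n) :
    (Pi.single u 1 - Pi.single w 1) ⬝ᵥ (D *ᵥ (Pi.single u' 1 - Pi.single w' 1))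
      = D u u' - D u w' - D w u' + D w w' := by
  rw [quad_sub]
  congr 1
  · congr 1
    · congr 1 <;> simp [Matrix.mulVec_single, single_dotProduct]
    · simp [Matrix.mulVec_single, single_dotProduct]
  · simp [Matrix.mulVec_single, single_dotProduct]

lemma pair_single_dot {n : ℕ} (u u' : Fin n) :
    (Pi.single u 1 : Fin n → ℝ) ⬝ᵥ (Pi.single u' 1) = if u = u' then 1 else 0 := by
  rw [single_dotProduct]
  simp [Pi.single_apply]

lemma star_case {n k : ℕ} (G : SimpleGraph (Fin n)) (hconn : G.Connected) (hk : 1 ≤ k)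
    (w : Fin n) (v : Fin k → Fin n) (hinj : Function.Injective v)
    (hvw : ∀ i, v i ≠ w) (hadj : ∀ i, G.Adj w (v i))
    (hnadj : ∀ i j, i ≠ j → ¬ G.Adj (v i) (v j)) :
    distEig G k ≥ -2 := by
  have hd1 : ∀ i, G.dist (v i) w = 1 :=
    fun i => SimpleGraph.dist_eq_one_iff_adj.mpr (hadj i).symm
  have hd1' : ∀ i, G.dist w (v i) = 1 :=
    fun i => SimpleGraph.dist_eq_one_iff_adj.mpr (hadj i)
  have hd2 : ∀ i j, i ≠ j → G.dist (v i) (v j) = 2 := by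
    intro i j hij
    exact dist_eq_two hconn (fun h => hij (hinj h)) (hnadj i j hij) (hadj i).symm (hadj j)
  apply distEig_ge_of_pattern G hk (fun i => Pi.single (v i) 1 - Pi.single w 1)
    0 (-2) 1 1
  · intro i j
    rw [pair_quad]
    by_cases hij : i = j
    · subst hij
      simp only [distMatrix, hd1, hd1', SimpleGraph.dist_self, if_pos rfl]
      norm_num
    · simp only [distMatrix, hd1, hd1', hd2 i j hij, SimpleGraph.dist_self, if_neg hij]
      norm_num
  · intro i j
    rw [dot_sub_sub, pair_single_dot, pair_single_dot, pair_single_dot, pair_single_dot]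
    by_cases hij : i = j
    · subst hij
      have h2 : ¬ (w = v i) := fun h => (hvw i) h.symm
      simp only [if_pos rfl, if_neg (hvw i), if_neg h2]
      norm_num
    · have h1 : ¬ (v i = v j) := fun h => hij (hinj h)
      have h2 : ¬ (w = v j) := fun h => (hvw j) h.symm
      simp only [if_neg h1, if_neg (hvw i), if_neg h2, if_pos rfl, if_neg hij]
      norm_num
  · norm_num
  · norm_num
  · norm_num
  · norm_num

lemma matching_case {n k : ℕ} (G : SimpleGraph (Fin n)) (hk : 1 ≤ k)
    (u w : Fin (k+1) → Fin n)
    (hu : Function.Injective u) (hw : Function.Injective w)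
    (huw : ∀ a b, u a ≠ w b)
    (hadj : ∀ a, G.Adj (u a) (w a))
    (c : ℝ) (hc : c ≤ 2)
    (hcross : ∀ a b, a ≠ b →
      distMatrix G (u a) (u b) - distMatrix G (u a) (w b)
        - distMatrix G (w a) (u b) + distMatrix G (w a) (w b) = c) :
    distEig G k ≥ -2 := by
  set p : Fin (k+1) → Fin n → ℝ :=
    fun a => Pi.single (u a) 1 - Pi.single (w a) 1 with hp
  have hd1 : ∀ a, G.dist (u a) (w a) = 1 :=
    fun a => SimpleGraph.dist_eq_one_iff_adj.mpr (hadj a)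
  have hd1' : ∀ a, G.dist (w a) (u a) = 1 :=
    fun a => SimpleGraph.dist_eq_one_iff_adj.mpr (hadj a).symm
  have hQ : ∀ a b, p a ⬝ᵥ (distMatrix G *ᵥ p b) = if a = b then -2 else c := by
    intro a b
    rw [hp, pair_quad]
    by_cases hab : a = b
    · subst hab
      simp only [distMatrix, hd1, hd1', SimpleGraph.dist_self, if_pos rfl]
      norm_num
    · rw [if_neg hab]
      have := hcross a b hab
      linarith [this]
  have hG : ∀ a b, p a ⬝ᵥ p b = if a = b then 2 else 0 := by
    intro a b
    rw [hp]
    simp only []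
    rw [dot_sub_sub, pair_single_dot, pair_single_dot, pair_single_dot, pair_single_dot]
    have h1 : ¬ (u a = w b) := huw a b
    have h2 : ¬ (w a = u b) := fun h => (huw b a) h.symm
    by_cases hab : a = b
    · subst hab
      simp only [if_pos rfl, if_neg h1, if_neg h2]
      norm_num
    · have h3 : ¬ (u a = u b) := fun h => hab (hu h)
      have h4 : ¬ (w a = w b) := fun h => hab (hw h)
      simp only [if_neg h1, if_neg h2, if_neg h3, if_neg h4, if_neg hab]
      norm_num
  have hlast : ∀ i : Fin k, i.castSucc ≠ Fin.last k :=
    fun i => Fin.ne_of_lt (Fin.castSucc_lt_last i)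
  apply distEig_ge_of_pattern G hk
    (fun i => p i.castSucc - p (Fin.last k)) (-2 - c) (-2 - c) 2 2
  · intro i j
    rw [quad_sub, hQ, hQ, hQ, hQ]
    rw [if_neg (hlast i), if_pos rfl]
    have hlj : ¬ (Fin.last k = j.castSucc) := fun h => (hlast j) h.symm
    rw [if_neg hlj]
    by_cases hij : i = j
    · subst hij
      rw [if_pos rfl, if_pos rfl]
      ring
    · have h5 : ¬ (i.castSucc = j.castSucc) := fun h => hij (Fin.castSucc_injective _ h)
      rw [if_neg h5, if_neg hij]
      ring
  · intro i j
    rw [dot_sub_sub, hG, hG, hG, hG]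
    rw [if_neg (hlast i), if_pos rfl]
    have hlj : ¬ (Fin.last k = j.castSucc) := fun h => (hlast j) h.symm
    rw [if_neg hlj]
    by_cases hij : i = j
    · subst hij
      rw [if_pos rfl, if_pos rfl]
      ring
    · have h5 : ¬ (i.castSucc = j.castSucc) := fun h => hij (Fin.castSucc_injective _ h)
      rw [if_neg h5, if_neg hij]
      ring
  · linarith
  · linarith
  · norm_num
  · norm_num

/-! ### Pair colorings -/

noncomputable def cInt {n : ℕ} (G : SimpleGraph (Fin n)) (p q : Fin n × Fin n) : ℤ :=
  (G.dist p.1 q.1 : ℤ) + (G.dist p.2 q.2 : ℤ)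
    - (G.dist p.1 q.2 : ℤ) - (G.dist p.2 q.1 : ℤ)

noncomputable def pairColor {n : ℕ} (G : SimpleGraph (Fin n)) (p q : Fin n × Fin n) :
    Fin 5 :=
  ⟨(cInt G p q + 2).toNat % 5, Nat.mod_lt _ (by norm_num)⟩

lemma pairColor_symm {n : ℕ} (G : SimpleGraph (Fin n)) (p q : Fin n × Fin n) :
    pairColor G p q = pairColor G q p := by
  unfold pairColor cInt
  congr 2
  rw [SimpleGraph.dist_comm (u := p.1) (v := q.1), SimpleGraph.dist_comm (u := p.2) (v := q.2),
    SimpleGraph.dist_comm (u := p.1) (v := q.2), SimpleGraph.dist_comm (u := p.2) (v := q.1)]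
  ring_nf

lemma cInt_range {n : ℕ} {G : SimpleGraph (Fin n)} (hconn : G.Connected)
    {p q : Fin n × Fin n} (hp : G.Adj p.1 p.2) (hq : G.Adj q.1 q.2) :
    -2 ≤ cInt G p q ∧ cInt G p q ≤ 2 := by
  have e1 : G.dist p.1 p.2 = 1 := SimpleGraph.dist_eq_one_iff_adj.mpr hp
  have e2 : G.dist p.2 p.1 = 1 := SimpleGraph.dist_eq_one_iff_adj.mpr hp.symm
  have e3 : G.dist q.1 q.2 = 1 := SimpleGraph.dist_eq_one_iff_adj.mpr hq
  have e4 : G.dist q.2 q.1 = 1 := SimpleGraph.dist_eq_one_iff_adj.mpr hq.symm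
  have t1 := hconn.dist_triangle (u := p.1) (v := p.2) (w := q.1)
  have t2 := hconn.dist_triangle (u := p.2) (v := p.1) (w := q.1)
  have t3 := hconn.dist_triangle (u := p.2) (v := p.1) (w := q.2)
  have t4 := hconn.dist_triangle (u := p.1) (v := p.2) (w := q.2)
  rw [e1] at t1 t4
  rw [e2] at t2 t3
  unfold cInt
  omega

lemma cInt_eq_of_color {n : ℕ} {G : SimpleGraph (Fin n)} {p q : Fin n × Fin n} {t : Fin 5}
    (hcol : pairColor G p q = t) (h1 : -2 ≤ cInt G p q) (h2 : cInt G p q ≤ 2) :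
    cInt G p q = (t : ℤ) - 2 := by
  have := congrArg Fin.val hcol
  unfold pairColor at this
  simp only at this
  omega

/-! ### Partial matchings -/

def IsPM {n : ℕ} (G : SimpleGraph (Fin n)) (P : Finset (Fin n × Fin n)) : Prop :=
  (∀ p ∈ P, G.Adj p.1 p.2) ∧
  ∀ p ∈ P, ∀ q ∈ P, p ≠ q → p.1 ≠ q.1 ∧ p.1 ≠ q.2 ∧ p.2 ≠ q.1 ∧ p.2 ≠ q.2


theorem kth_largest_distance_eigenvalue_ge_neg_two :
    ∀ k : ℕ, 2 ≤ k → ∃ N : ℕ, ∀ n : ℕ, N ≤ n →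
      ∀ G : SimpleGraph (Fin n), G.Connected →
        distEig G k ≥ -2 := by
  intro k hk
  classical
  set M := ramseyFuel 5 (5*(k+1)) (fun _ => k+1) with hM
  refine ⟨2*M*(k+1) + 2*M + 2*k + 2, ?_⟩
  intro n hn G hconn
  have hk1 : 1 ≤ k := by omega
  -- maximal partial matching
  set PP := (univ : Finset (Finset (Fin n × Fin n))).filter (IsPM G) with hPP
  have hemp : ∅ ∈ PP := by
    rw [hPP, mem_filter]
    exact ⟨mem_univ _, by intro p hp; simp at hp, by intro p hp; simp at hp⟩
  obtain ⟨P, hPmem, hPmax⟩ := Finset.exists_max_image PP Finset.card ⟨∅, hemp⟩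
  have hPM : IsPM G P := (mem_filter.mp hPmem).2
  set m := P.card with hm
  set S : Finset (Fin n) := P.biUnion (fun p => {p.1, p.2}) with hSdef
  have hS2 : S.card ≤ 2*m := by
    refine le_trans (Finset.card_biUnion_le) ?_
    have : ∀ p ∈ P, ({p.1, p.2} : Finset (Fin n)).card ≤ 2 := by
      intro p _
      exact le_trans (Finset.card_insert_le _ _) (by simp)
    calc ∑ p ∈ P, ({p.1, p.2} : Finset (Fin n)).card ≤ ∑ p ∈ P, 2 :=
          Finset.sum_le_sum this
      _ = 2*m := by rw [Finset.sum_const, hm]; ring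
  have hmemS : ∀ q ∈ P, q.1 ∈ S ∧ q.2 ∈ S := by
    intro q hq
    constructor <;> exact Finset.mem_biUnion.mpr ⟨q, hq, by simp⟩
  -- maximality: unmatched vertices are pairwise non-adjacent
  have hkey : ∀ a b : Fin n, a ∉ S → b ∉ S → a ≠ b → ¬ G.Adj a b := by
    intro a b ha hb hab hadj
    have habP : (a, b) ∉ P := fun h => ha (hmemS _ h).1
    have hins : IsPM G (insert (a,b) P) := by
      constructor
      · intro p hp
        rcases Finset.mem_insert.mp hp with rfl | hp
        · exact hadj
        · exact hPM.1 p hp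
      · intro p hp q hq hpq
        rcases Finset.mem_insert.mp hp with rfl | hp
        · rcases Finset.mem_insert.mp hq with rfl | hq
          · exact absurd rfl hpq
          · have h1 := (hmemS q hq).1
            have h2 := (hmemS q hq).2
            exact ⟨fun h => ha ((show a = q.1 from h) ▸ h1),
              fun h => ha ((show a = q.2 from h) ▸ h2),
              fun h => hb ((show b = q.1 from h) ▸ h1),
              fun h => hb ((show b = q.2 from h) ▸ h2)⟩
        · rcases Finset.mem_insert.mp hq with rfl | hq
          · have h1 := (hmemS p hp).1
            have h2 := (hmemS p hp).2
            exact ⟨fun h => ha ((show a = p.1 from h.symm) ▸ h1),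
              fun h => hb ((show b = p.1 from h.symm) ▸ h1),
              fun h => ha ((show a = p.2 from h.symm) ▸ h2),
              fun h => hb ((show b = p.2 from h.symm) ▸ h2)⟩
          · exact hPM.2 p hp q hq hpq
    have hmem' : insert (a,b) P ∈ PP := by
      rw [hPP, mem_filter]; exact ⟨mem_univ _, hins⟩
    have hcard := Finset.card_insert_of_notMem habP
    have := hPmax _ hmem'
    omega
  by_cases hmM : M ≤ m
  · -- Ramsey case : many disjoint edges
    have hsum : (∑ _i : Fin 5, (k+1)) ≤ 5*(k+1) := by
      rw [Finset.sum_const, Finset.card_univ]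
      simp
    obtain ⟨t, T, hTP, hTcard, hmono⟩ := ramsey_prop 5 (by norm_num) (5*(k+1))
      (fun _ => k+1) hsum (pairColor G) (pairColor_symm G) P hmM
    set e := Finset.equivFinOfCardEq hTcard with he
    set f : Fin (k+1) → Fin n × Fin n := fun i => (e.symm i : Fin n × Fin n) with hf
    have hfT : ∀ i, f i ∈ T := fun i => (e.symm i).2
    have hfP : ∀ i, f i ∈ P := fun i => hTP (hfT i)
    have hfinj : Function.Injective f := by
      intro a b hab
      have := Subtype.ext hab (p := fun x => x ∈ T)
      exact e.symm.injective this
    set u : Fin (k+1) → Fin n := fun i => (f i).1 with hudef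
    set w : Fin (k+1) → Fin n := fun i => (f i).2 with hwdef
    have hdiff : ∀ a b, a ≠ b → (f a).1 ≠ (f b).1 ∧ (f a).1 ≠ (f b).2 ∧
        (f a).2 ≠ (f b).1 ∧ (f a).2 ≠ (f b).2 :=
      fun a b hab => hPM.2 (f a) (hfP a) (f b) (hfP b) (fun h => hab (hfinj h))
    have hadjf : ∀ a, G.Adj (u a) (w a) := fun a => hPM.1 (f a) (hfP a)
    have hu : Function.Injective u := by
      intro a b hab
      by_contra hne
      exact (hdiff a b hne).1 hab
    have hw : Function.Injective w := by
      intro a b hab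
      by_contra hne
      exact (hdiff a b hne).2.2.2 hab
    have huw : ∀ a b, u a ≠ w b := by
      intro a b
      by_cases hab : a = b
      · subst hab
        exact (hadjf a).ne
      · exact (hdiff a b hab).2.1
    -- the constant cross value
    set c : ℝ := (t : ℕ) - 2 with hc
    have hc2 : c ≤ 2 := by
      have := t.isLt
      rw [hc]
      have h4 : (t : ℕ) ≤ 4 := by omega
      have : ((t : ℕ) : ℝ) ≤ 4 := by exact_mod_cast h4
      linarith
    have hcross : ∀ a b, a ≠ b →
        distMatrix G (u a) (u b) - distMatrix G (u a) (w b)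
          - distMatrix G (w a) (u b) + distMatrix G (w a) (w b) = c := by
      intro a b hab
      have hfne : f a ≠ f b := fun h => hab (hfinj h)
      have hcol := hmono (f a) (hfT a) (f b) (hfT b) hfne
      obtain ⟨hr1, hr2⟩ := cInt_range hconn (hadjf a) (hadjf b)
      have hcint := cInt_eq_of_color hcol hr1 hr2
      have : ((cInt G (f a) (f b) : ℤ) : ℝ) = c := by
        rw [hcint, hc]
        push_cast
        ring
      rw [← this]
      unfold cInt distMatrix
      push_cast
      ring
    exact matching_case G hk1 u w hu hw huw hadjf c hc2 hcross
  · -- star case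
    push_neg at hmM
    set Uns := (univ : Finset (Fin n)) \ S with hUns
    have hUcard : n - 2*m ≤ Uns.card := by
      rw [hUns, Finset.card_sdiff_of_subset (Finset.subset_univ S), Finset.card_univ, Fintype.card_fin]
      omega
    have hnotS : ∀ a ∈ Uns, a ∉ S := by
      intro a ha
      exact (Finset.mem_sdiff.mp ha).2
    have hnb : ∀ a ∈ Uns, ∃ b, b ∈ S ∧ G.Adj a b := by
      intro a ha
      obtain ⟨b0, hbne⟩ := Fintype.exists_ne_of_one_lt_card (by simp; omega) a
      obtain ⟨wk⟩ := hconn.preconnected a b0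
      have hnbr : ∃ b, G.Adj a b := by
        cases wk with
        | nil => exact absurd rfl hbne
        | cons h _ => exact ⟨_, h⟩
      obtain ⟨b, hb⟩ := hnbr
      by_cases hbS : b ∈ S
      · exact ⟨b, hbS, hb⟩
      · exact absurd hb (hkey a b (hnotS a ha) hbS (G.ne_of_adj hb))
    choose g hg using hnb
    set g' : Fin n → Fin n := fun a => if h : a ∈ Uns then g a h else a with hg'
    have hmaps : ∀ a ∈ Uns, g' a ∈ S := by
      intro a ha
      rw [hg']
      simp only [dif_pos ha]
      exact (hg a ha).1
    have hUnsne : Uns.Nonempty := by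
      rw [← Finset.card_pos]
      omega
    have hSne : S.Nonempty := by
      obtain ⟨a, ha⟩ := hUnsne
      exact ⟨g' a, hmaps a ha⟩
    have hcnt : S.card * k ≤ Uns.card := by
      have hU2 : n ≤ Uns.card + 2*m := by omega
      have p1 : S.card * k ≤ (2*m) * k := mul_le_mul_left hS2 k
      have p2 : (m+1) * (k+1) ≤ M * (k+1) := mul_le_mul_left (show m+1 ≤ M from hmM) (k+1)
      nlinarith [p1, p2, hU2, hn]
    obtain ⟨w0, hw0S, hfib⟩ :=
      Finset.exists_le_card_fiber_of_mul_le_card_of_maps_to hmaps hSne hcnt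
    obtain ⟨V0, hV0sub, hV0card⟩ := Finset.exists_subset_card_eq hfib
    set e := Finset.equivFinOfCardEq hV0card with he
    set v : Fin k → Fin n := fun i => (e.symm i : Fin n) with hv
    have hvV0 : ∀ i, v i ∈ V0 := fun i => (e.symm i).2
    have hvfib : ∀ i, v i ∈ Uns ∧ g' (v i) = w0 := by
      intro i
      have := hV0sub (hvV0 i)
      exact Finset.mem_filter.mp this
    have hvinj : Function.Injective v := by
      intro a b hab
      exact e.symm.injective (Subtype.ext hab)
    have hvadj : ∀ i, G.Adj w0 (v i) := by
      intro i
      obtain ⟨hmem, hgv⟩ := hvfib i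
      have := (hg (v i) hmem).2
      rw [hg'] at hgv
      simp only [dif_pos hmem] at hgv
      rw [hgv] at this
      exact this.symm
    have hvw : ∀ i, v i ≠ w0 := by
      intro i h
      exact hnotS (v i) (hvfib i).1 (h ▸ hw0S)
    have hvnadj : ∀ i j, i ≠ j → ¬ G.Adj (v i) (v j) := by
      intro i j hij
      exact hkey (v i) (v j) (hnotS _ (hvfib i).1) (hnotS _ (hvfib j).1)
        (fun h => hij (hvinj h))
    exact star_case G hconn hk1 w0 v hvinj hvw hvadj hvnadj

end Aux
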